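/- There exists a cellular automaton F on a four-letter alphabet whose trace subshift τ(F) is not sofic, i.e., the language L(τ(F)) is not a regular language. (One such F is the particle automaton on A = {b, r, l, w} of the paper, whose language satisfies L(τ(F)) ∩ l b^* r b^* l b^* r = ⋃_{p,q∈ℕ} { l b^{2p} r b^{2q} l b^{2p} r }.) -/

import Mathlib

variable {A : Type*}

/-- The onesided shift on `A^ℕ`. -/
def shiftN (z : ℕ → A) : ℕ → A := fun i => z (i + 1)

/-- The twosided shift on `A^ℤ`. -/
def shiftZ (x : ℤ → A) : ℤ → A := fun i => x (i + 1)

/-- A (onesided) subshift: a closed, shift-stable set of infinite words. -/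
def IsSubshift [TopologicalSpace A] (S : Set (ℕ → A)) : Prop :=
  IsClosed S ∧ ∀ z ∈ S, shiftN z ∈ S

/-- A 2-SFT: a subshift given by a set of forbidden words of length 2. -/
def IsTwoSFT (S : Set (ℕ → A)) : Prop :=
  ∃ Fb : Set (A × A), S = {z | ∀ i : ℕ, (z i, z (i + 1)) ∉ Fb}

/-- A k-SFT: a subshift given by a set of forbidden words of length k. -/
def IsKSFT (k : ℕ) (S : Set (ℕ → A)) : Prop :=
  ∃ Fb : Set (Fin k → A), S = {z | ∀ i : ℕ, (fun j : Fin k => z (i + (j : ℕ))) ∉ Fb}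

/-- A subshift of finite type. -/
def IsSFT (S : Set (ℕ → A)) : Prop := ∃ k : ℕ, IsKSFT k S

/-- A cellular automaton: a continuous self-map of `A^ℤ` commuting with the shift. -/
def IsCA [TopologicalSpace A] (F : (ℤ → A) → (ℤ → A)) : Prop :=
  Continuous F ∧ ∀ x, F (shiftZ x) = shiftZ (F x)

/-- The trace of `F` with initial condition `x`: the 0th column of the space-time diagram. -/
def caTrace (F : (ℤ → A) → (ℤ → A)) (x : ℤ → A) : ℕ → A := fun j => F^[j] x 0

/-- The trace subshift of `F`. -/
def traceSubshift (F : (ℤ → A) → (ℤ → A)) : Set (ℕ → A) := Set.range (caTrace F)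

/-- A subshift is traceable if it is the trace subshift of some CA. -/
def Traceable [TopologicalSpace A] (S : Set (ℕ → A)) : Prop :=
  ∃ F : (ℤ → A) → (ℤ → A), IsCA F ∧ traceSubshift F = S

/-- The q-th projection of an infinite word over the alphabet `A^k`. -/
def proj {k : ℕ} (q : Fin k) (z : ℕ → (Fin k → A)) : ℕ → A := fun j => z j q

/-- `π(Γ)`: the union of all projections. -/
def projAll {k : ℕ} (Γ : Set (ℕ → (Fin k → A))) : Set (ℕ → A) :=
  ⋃ q : Fin k, proj q '' Γ

/-- A subshift `S` on `A` is T1 if there is a 2-SFT `Γ ⊆ (A^k)^ℕ` with `π₀(Γ) = π(Γ) = S`. -/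
def IsT1 (S : Set (ℕ → A)) : Prop :=
  ∃ k : ℕ, ∃ hk : 0 < k, ∃ Γ : Set (ℕ → (Fin k → A)),
    IsTwoSFT Γ ∧ proj (⟨0, hk⟩ : Fin k) '' Γ = S ∧ projAll Γ = S

/-- A onesided CA: one admitting a local rule of anchor 0. -/
def IsOnesidedCA {C : Type*} (F : (ℤ → C) → (ℤ → C)) : Prop :=
  ∃ d : ℕ, ∃ f : (Fin d → C) → C, ∀ x i, F x i = f (fun j => x (i + (j : ℕ)))

/-- `S` is the k-trace of a onesided CA on some alphabet `B ⊆ A^k`. -/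
def KTraceable (k : ℕ) (S : Set (ℕ → A)) : Prop :=
  ∃ B : Set (Fin k → A), ∃ F : (ℤ → ↥B) → (ℤ → ↥B), IsOnesidedCA F ∧
    S = ⋃ q : Fin k, (fun z : ℕ → ↥B => fun j => ((z j : Fin k → A) q)) '' Set.range (caTrace F)

/-- `S` is a factor of `Γ`: a surjective continuous shift-commuting map from `Γ` onto `S`. -/
def IsFactorOf {B : Type*} [TopologicalSpace A] [TopologicalSpace B]
    (S : Set (ℕ → A)) (Γ : Set (ℕ → B)) : Prop :=
  ∃ φ : (ℕ → B) → (ℕ → A), ContinuousOn φ Γ ∧ φ '' Γ = S ∧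
    ∀ z ∈ Γ, φ (shiftN z) = shiftN (φ z)

/-- The language of a subshift: all finite factors of its elements. -/
def lang (S : Set (ℕ → A)) : Language A :=
  {w | ∃ z ∈ S, ∃ i : ℕ, w = List.ofFn (fun j : Fin w.length => z (i + (j : ℕ)))}

/-- A transitive subshift. -/
def IsTransitiveSubshift (S : Set (ℕ → A)) : Prop :=
  ∀ u ∈ lang S, ∀ v ∈ lang S, ∃ w : List A, u ++ w ++ v ∈ lang S

/-- A T2 subshift: sofic, and including an infinite transitive subshift. -/
def IsT2 [TopologicalSpace A] (S : Set (ℕ → A)) : Prop :=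
  (lang S).IsRegular ∧ ∃ Γ ⊆ S, IsSubshift Γ ∧ Γ.Infinite ∧ IsTransitiveSubshift Γ

/-- `B^ω`: infinite concatenations of words from `B ⊆ A^k`. -/
def Bomega {k : ℕ} (B : Set (Fin k → A)) : Set (ℕ → A) :=
  {z | ∀ i : ℕ, (fun q : Fin k => z (i * k + (q : ℕ))) ∈ B}

/-- A T3 subshift: T0 via a map `φ`, together with a periodic word `w ∉ φ(A)^*`. -/
def IsT3 (S : Set (ℕ → A)) : Prop :=
  ∃ φ : A → A, (∀ a : A, (fun j => φ^[j] a) ∈ S) ∧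
    ∃ w : List A, w ≠ [] ∧ (∃ a ∈ w, a ∉ Set.range φ) ∧
      ∃ z ∈ S, (∀ j : ℕ, z (j + w.length) = z j) ∧ ∀ i : Fin w.length, z (i : ℕ) = w.get i

namespace Stmt17


abbrev A4 := Fin 4
def B : A4 := 0
def W : A4 := 1
def R : A4 := 2
def L : A4 := 3

def f (a c d : A4) : A4 :=
  if c = W then W
  else if c = B then
    (if a = R ∧ d = L then W else if a = R then R else if d = L then L else B)
  else if c = R then
    (if d = L then W else if d = W then (if a = R then W else L) else B)
  else
    (if a = R then W else if a = W then (if d = L then W else R) else if d = L then W else B)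

def F (x : ℤ → A4) : ℤ → A4 := fun i => f (x (i - 1)) (x i) (x (i + 1))

lemma Rpre (a c d : A4) (h : f a c d = R) : (c = B ∧ a = R ∧ d ≠ L) ∨ (c = L ∧ a = W ∧ d ≠ L) := by
  revert h; fin_cases a <;> fin_cases c <;> fin_cases d <;> decide

lemma Lpre (a c d : A4) (h : f a c d = L) : (c = B ∧ d = L ∧ a ≠ R) ∨ (c = R ∧ d = W ∧ a ≠ R) := by
  revert h; fin_cases a <;> fin_cases c <;> fin_cases d <;> decide

lemma Wpre (a c d : A4) (h : f a c d = W) :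
    c = W ∨ (c = B ∧ a = R ∧ d = L) ∨ (c = R ∧ d = L) ∨ (c = R ∧ d = W ∧ a = R) ∨
      (c = L ∧ a = R) ∨ (c = L ∧ d = L) := by
  revert h; fin_cases a <;> fin_cases c <;> fin_cases d <;> decide

lemma fW (a d : A4) : f a W d = W := by fin_cases a <;> fin_cases d <;> decide
lemma f_rl (a : A4) : f a R L = W := by fin_cases a <;> decide
lemma f_ll (a : A4) : f a L L = W := by fin_cases a <;> decide
lemma f_rbl : f R B L = W := by decide
lemma f_move_l (a : A4) (ha : a ≠ R) : f a B L = L := by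
  revert ha; fin_cases a <;> decide
lemma f_lr (d : A4) : f R L d = W := by fin_cases d <;> decide

lemma stepX (x : ℤ → A4) (s : ℕ) (i : ℤ) :
    F^[s + 1] x i = f (F^[s] x (i - 1)) (F^[s] x i) (F^[s] x (i + 1)) := by
  rw [Function.iterate_succ_apply']; rfl

lemma stepX' (x : ℤ → A4) (s : ℕ) (hs : 1 ≤ s) (i : ℤ) :
    F^[s] x i = f (F^[s-1] x (i - 1)) (F^[s-1] x i) (F^[s-1] x (i + 1)) := by
  have h : s = (s - 1) + 1 := by omega
  rw [h, stepX]
  have h2 : s - 1 + 1 - 1 = s - 1 := by omega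
  rw [h2]

/-- walls are permanent -/
lemma wPerm (x : ℤ → A4) (s : ℕ) (i : ℤ) (h : F^[s] x i = W) :
    ∀ t, s ≤ t → F^[t] x i = W := by
  intro t hst
  induction t with
  | zero =>
    have h0 : s = 0 := by omega
    rwa [← h0]
  | succ t ih =>
    rcases Nat.lt_or_ge s (t+1) with hlt | hge
    · have ht : F^[t] x i = W := ih (by omega)
      rw [stepX, ht, fW]
    · have : s = t + 1 := by omega
      rwa [← this]

lemma valCases (u : A4) : u = B ∨ u = W ∨ u = R ∨ u = L := by fin_cases u <;> simp [B, W, R, L]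

section Main

variable (x : ℤ → A4) (p p' : ℕ)

/-- observed column -/
structure Col : Prop where
  h0 : F^[0] x 0 = L
  hb1 : ∀ s, 0 < s → s < 2*p+1 → F^[s] x 0 = B
  hS : F^[2*p+1] x 0 = R
  hb2 : F^[2*p+2] x 0 = B
  hb3 : F^[2*p+3] x 0 = B
  hT2 : F^[2*p+4] x 0 = L
  hb4 : ∀ s, 2*p+4 < s → s < 2*p+2*p'+5 → F^[s] x 0 = B
  hT3 : F^[2*p+2*p'+5] x 0 = R
  hp : 2 ≤ p
  hp' : 2 ≤ p'

variable {x p p'} (hc : Col x p p')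

include hc

lemma noW0 : ∀ s, s ≤ 2*p+2*p'+5 → F^[s] x 0 ≠ W := by
  intro s hs hW
  have := wPerm x s 0 hW (2*p+2*p'+5) hs
  rw [hc.hT3] at this
  exact absurd this (by decide)

lemma colL : ∀ s, s ≤ 2*p+2*p'+5 → F^[s] x 0 = L → s = 0 ∨ s = 2*p+4 := by
  intro s hs hL
  by_contra hcon
  push_neg at hcon
  have h1 : s ≠ 2*p+1 := fun h => by rw [h, hc.hS] at hL; exact absurd hL (by decide)
  have h2 : s ≠ 2*p+2*p'+5 := fun h => by rw [h, hc.hT3] at hL; exact absurd hL (by decide)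
  have hB : F^[s] x 0 = B := by
    rcases Nat.lt_or_ge s (2*p+1) with h | h
    · exact hc.hb1 s (by omega) h
    · rcases Nat.lt_or_ge s (2*p+2) with h' | h'
      · omega
      · rcases Nat.eq_or_lt_of_le h' with h'' | h''
        · rw [← h'']; exact hc.hb2
        · rcases Nat.lt_or_ge s (2*p+4) with h3 | h3
          · have : s = 2*p+3 := by omega
            rw [this]; exact hc.hb3
          · exact hc.hb4 s (by omega) (by omega)
  rw [hB] at hL; exact absurd hL (by decide)

lemma colR : ∀ s, s ≤ 2*p+2*p'+5 → F^[s] x 0 = R → s = 2*p+1 ∨ s = 2*p+2*p'+5 := by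
  intro s hs hR
  by_contra hcon
  push_neg at hcon
  have h1 : s ≠ 0 := fun h => by rw [h, hc.h0] at hR; exact absurd hR (by decide)
  have h2 : s ≠ 2*p+4 := fun h => by rw [h, hc.hT2] at hR; exact absurd hR (by decide)
  have hB : F^[s] x 0 = B := by
    rcases Nat.lt_or_ge s (2*p+1) with h | h
    · exact hc.hb1 s (by omega) h
    · rcases Nat.lt_or_ge s (2*p+2) with h' | h'
      · omega
      · rcases Nat.eq_or_lt_of_le h' with h'' | h''
        · rw [← h'']; exact hc.hb2
        · rcases Nat.lt_or_ge s (2*p+4) with h3 | h3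
          · have : s = 2*p+3 := by omega
            rw [this]; exact hc.hb3
          · exact hc.hb4 s (by omega) (by omega)
  rw [hB] at hR; exact absurd hR (by decide)


lemma trackP (RD : ∀ j, j ≤ p+1 → F^[2*p+1-j] x (-(j:ℤ)) = R) : False := by
  have Q : ∀ s, s ≤ p → F^[s] x (-(s:ℤ)) = L := by
    intro s
    induction s with
    | zero =>
      intro _
      simpa using hc.h0
    | succ s ih =>
      intro hs1
      have hQ : F^[s] x (-(s:ℤ)) = L := ih (by omega)
      have hRD : F^[2*p-s] x (-(s:ℤ)-1) = R := by
        have h := RD (s+1) (by omega)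
        have e1 : 2*p+1-(s+1) = 2*p-s := by omega
        have e2 : (-(((s:ℕ)+1:ℕ)):ℤ) = -(s:ℤ)-1 := by push_cast; ring
        rwa [e1, e2] at h
      have hkill : ∀ t, t ≤ s+1 → F^[t] x (-(s:ℤ)-1) = W → False := by
        intro t ht hW
        have hperm := wPerm x t _ hW (2*p-s) (by omega)
        exact absurd (hperm.symm.trans hRD) (by decide)
      have e1 : (-(s:ℤ)-1) - 1 = -(s:ℤ)-2 := by ring
      have e2 : (-(s:ℤ)-1) + 1 = -(s:ℤ) := by ring
      have egoal : (-(((s:ℕ)+1:ℕ)):ℤ) = -(s:ℤ)-1 := by push_cast; ring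
      rw [egoal]
      rcases valCases (F^[s] x (-(s:ℤ)-1)) with hv | hv | hv | hv
      · by_cases ha : F^[s] x (-(s:ℤ)-2) = R
        · exfalso
          refine hkill (s+1) le_rfl ?_
          rw [stepX, e1, e2, ha, hv, hQ, f_rbl]
        · rw [stepX, e1, e2, hv, hQ, f_move_l _ ha]
      · exact absurd (hkill s (by omega) hv) (fun h => h)
      · exfalso
        refine hkill (s+1) le_rfl ?_
        rw [stepX, e1, e2, hv, hQ, f_rl]
      · exfalso
        refine hkill (s+1) le_rfl ?_
        rw [stepX, e1, e2, hv, hQ, f_ll]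
  have hQp := Q p le_rfl
  have h1 : F^[p] x (-(p:ℤ)-1) = R := by
    have h := RD (p+1) (by omega)
    have e1 : 2*p+1-(p+1) = p := by omega
    have e2 : (-(((p:ℕ)+1:ℕ)):ℤ) = -(p:ℤ)-1 := by push_cast; ring
    rwa [e1, e2] at h
  have h2 : F^[p+1] x (-(p:ℤ)) = R := by
    have h := RD p (by omega)
    have e1 : 2*p+1-p = p+1 := by omega
    rwa [e1] at h
  have h3 : F^[p+1] x (-(p:ℤ)) = W := by
    rw [stepX, show (-(p:ℤ)) - 1 = -(p:ℤ)-1 by ring, h1, hQp, f_lr]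
  exact absurd (h2.symm.trans h3) (by decide)

lemma descendR :
    ∀ n, n ≤ 2*p+1 →
    (∀ j, j ≤ n → F^[2*p+1 - j] x (-(j:ℤ)) = R) ∨
    (∃ k, k < n ∧ (∀ j, j ≤ k → F^[2*p+1 - j] x (-(j:ℤ)) = R) ∧
      F^[2*p-k] x (-(k:ℤ)) = L ∧ F^[2*p-k] x (-(k:ℤ)-1) = W ∧ F^[2*p-k] x (-(k:ℤ)+1) ≠ L) := by
  intro n
  induction n with
  | zero =>
    intro _
    left
    intro j hj
    have h0 : j = 0 := by omega
    subst h0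
    simpa using hc.hS
  | succ n ih =>
    intro hn
    rcases ih (by omega) with hrun | ⟨k, hk, hrunk, ht⟩
    · have hr : F^[2*p+1-n] x (-(n:ℤ)) = R := hrun n le_rfl
      have e1 : 2*p+1-n = (2*p-n)+1 := by omega
      rw [e1, stepX] at hr
      rcases Rpre _ _ _ hr with ⟨hcc, ha, _⟩ | ⟨hcc, ha, hd⟩
      · left
        intro j hj
        rcases Nat.lt_or_ge j (n+1) with h | h
        · exact hrun j (by omega)
        · have hj1 : j = n+1 := by omega
          subst hj1
          have e2 : 2*p+1-(n+1) = 2*p-n := by omega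
          have e3 : (-(((n:ℕ)+1:ℕ)):ℤ) = -(n:ℤ) - 1 := by push_cast; ring
          rw [e2, e3]
          exact ha
      · right
        exact ⟨n, by omega, fun j hj => hrun j hj, hcc, ha, by
          rwa [show (-(n:ℤ)+1) = -(n:ℤ)+1 by ring]⟩
    · right
      exact ⟨k, by omega, hrunk, ht⟩


lemma lrunAux (k : ℕ) (hkp : k ≤ p) (RD : ∀ j, j ≤ k → F^[2*p+1-j] x (-(j:ℤ)) = R)
    (hstart : F^[2*p-k] x (-(k:ℤ)) = L) :
    ∀ n, n ≤ k →
      (∀ i, i ≤ n → F^[2*p-k-i] x (-(k:ℤ)+i) = L) ∧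
      (∀ i, i < n → F^[2*p-k-i-1] x (-(k:ℤ)+i) = B) := by
  intro n
  induction n with
  | zero =>
    intro _
    refine ⟨?_, ?_⟩
    · intro i hi
      have h0 : i = 0 := by omega
      subst h0
      simpa using hstart
    · intro i hi; omega
  | succ n ih =>
    intro hn
    obtain ⟨hrun, hside⟩ := ih (by omega)
    have hl : F^[2*p-k-n] x (-(k:ℤ)+n) = L := hrun n le_rfl
    have e1 : 2*p-k-n = (2*p-k-n-1)+1 := by omega
    rw [e1, stepX] at hl
    rcases Lpre _ _ _ hl with ⟨hcc, hd, _⟩ | ⟨hcc, hd, _⟩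
    · constructor
      · intro i hi
        rcases Nat.lt_or_ge i (n+1) with h | h
        · exact hrun i (by omega)
        · have hi1 : i = n+1 := by omega
          subst hi1
          have e2 : 2*p-k-(n+1) = 2*p-k-n-1 := by omega
          have e3 : (-(k:ℤ)+((n:ℕ)+1:ℕ)) = (-(k:ℤ)+n) + 1 := by push_cast; ring
          rw [e2, e3]
          exact hd
      · intro i hi
        rcases Nat.lt_or_ge i n with h | h
        · exact hside i h
        · have hi1 : i = n := by omega
          subst hi1
          exact hcc
    · exfalso
      by_cases hz : (-(k:ℤ)+n) + 1 = 0
      · exact noW0 hc (2*p-k-n-1) (by omega) (by rwa [hz] at hd)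
      · have hj : (n:ℤ) + 1 ≤ (k:ℤ) := by
          have : -(k:ℤ)+n+1 ≤ 0 := by omega
          omega
        have hRD : F^[2*p+1-(k-n-1)] x (-(k:ℤ)+n+1) = R := by
          have h := RD (k-n-1) (by omega)
          have e3 : (-((k-n-1:ℕ)):ℤ) = -(k:ℤ)+n+1 := by omega
          rwa [e3] at h
        have hperm := wPerm x (2*p-k-n-1) _ hd (2*p+1-(k-n-1)) (by omega)
        rw [show (-(k:ℤ)+n) + 1 = -(k:ℤ)+n+1 by ring] at hperm
        exact absurd (hperm.symm.trans hRD) (by decide)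

lemma chain1 :
    (∀ j, j ≤ p → F^[j] x (-(j:ℤ)) = L) ∧
    (∀ j, j < p → F^[j] x (-(j:ℤ)-1) = B) ∧
    (F^[p] x (-(p:ℤ)-1) = W) ∧
    (∀ j, j ≤ p → F^[2*p+1-j] x (-(j:ℤ)) = R) := by
  rcases descendR hc (2*p+1) le_rfl with hrun | ⟨k, hk, hrunk, htL, htW, _⟩
  · exact absurd (trackP hc (fun j hj => hrun j (by omega))) (fun h => h)
  · by_cases hkp : k ≤ p
    · obtain ⟨hrunL, hsideL⟩ := lrunAux hc k hkp (fun j hj => hrunk j hj) htL k le_rfl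
      have hend : F^[2*p-k-k] x 0 = L := by
        have h := hrunL k le_rfl
        rwa [show (-(k:ℤ)+(k:ℕ)) = 0 by ring] at h
      have hk0 : 2*p-k-k = 0 ∨ 2*p-k-k = 2*p+4 := colL hc _ (by omega) hend
      have hkep : k = p := by omega
      rw [hkep] at hrunL hsideL htW hrunk
      refine ⟨?_, ?_, ?_, fun j hj => hrunk j (by omega)⟩
      · intro j hj
        have h := hrunL (p-j) (by omega)
        have e1 : 2*p-p-(p-j) = j := by omega
        have e2 : (-(p:ℤ)+((p-j:ℕ)):ℤ) = -(j:ℤ) := by omega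
        rwa [e1, e2] at h
      · intro j hj
        have h := hsideL (p-j-1) (by omega)
        have e1 : 2*p-p-(p-j-1)-1 = j := by omega
        have e2 : (-(p:ℤ)+((p-j-1:ℕ)):ℤ) = -(j:ℤ)-1 := by omega
        rwa [e1, e2] at h
      · have e1 : 2*p-p = p := by omega
        rwa [e1] at htW
    · exact absurd (trackP hc (fun j hj => hrunk j (by omega))) (fun h => h)


lemma master :
    ∀ σ, σ ≤ 2*p+2*p'+5 →
      ((∀ e : ℤ, -(p:ℤ) ≤ e → e ≤ -1 → F^[σ] x e ≠ W) ∧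
       (∀ c : ℤ, -(p:ℤ) ≤ c → c ≤ -1 → F^[σ] x c = L →
          ((σ:ℤ) + c = 0 ∨ (σ:ℤ) + c = 2*p+4 ∨ (σ:ℤ) + c < 0)) ∧
       (∀ c : ℤ, -(p:ℤ) ≤ c → c ≤ -1 → F^[σ] x c = R → 0 < (σ:ℤ) + c →
          ((σ:ℤ) - c = 2*p+1 ∨ (σ:ℤ) - c = 4*p+5))) := by
  obtain ⟨A1, A2b, A3, A4⟩ := chain1 hc
  have hp2 := hc.hp
  have hp2' := hc.hp'
  intro σ
  induction σ using Nat.strong_induction_on with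
  | _ σ IH =>
  intro hσ
  have hCL : ∀ c : ℤ, -(p:ℤ) ≤ c → c ≤ -1 → F^[σ] x c = L →
      ((σ:ℤ) + c = 0 ∨ (σ:ℤ) + c = 2*p+4 ∨ (σ:ℤ) + c < 0) := by
    intro c hcp hc1 hL
    rcases Nat.eq_zero_or_pos σ with h0 | h1
    · subst h0; right; right; omega
    · rw [stepX' x σ h1] at hL
      rcases Lpre _ _ _ hL with ⟨hcc, hd, ha⟩ | ⟨hcc, hd, ha⟩
      · by_cases hz : c + 1 = 0
        · rcases colL hc (σ-1) (by omega) (by rwa [hz] at hd) with h | h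
          · left; omega
          · right; left; omega
        · rcases (IH (σ-1) (by omega) (by omega)).2.1 (c+1) (by omega) (by omega) hd with
            h | h | h
          · left; omega
          · right; left; omega
          · right; right; omega
      · exfalso
        by_cases hz : c + 1 = 0
        · exact noW0 hc (σ-1) (by omega) (by rwa [hz] at hd)
        · exact (IH (σ-1) (by omega) (by omega)).1 (c+1) (by omega) (by omega) hd
  have hCR : ∀ c : ℤ, -(p:ℤ) ≤ c → c ≤ -1 → F^[σ] x c = R → 0 < (σ:ℤ) + c →
      ((σ:ℤ) - c = 2*p+1 ∨ (σ:ℤ) - c = 4*p+5) := by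
    intro c hcp hc1 hR hsum
    have h1 : 1 ≤ σ := by omega
    rw [stepX' x σ h1] at hR
    rcases Rpre _ _ _ hR with ⟨hcc, ha, hd⟩ | ⟨hcc, ha, hd⟩
    · rcases lt_trichotomy ((σ:ℤ) + c - 2) 0 with hneg | hzero | hpos
      · by_cases hcase : (σ:ℤ) - 1 ≤ (p:ℤ) - 1
        · have hA := A2b (σ-1) (by omega)
          have e : (-((σ-1:ℕ):ℤ)-1) = c - 1 := by omega
          rw [e] at hA
          exact absurd (hA.symm.trans ha) (by decide)
        · have hA : F^[σ-1] x (c-1) = W := by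
            have e : c - 1 = -(p:ℤ)-1 := by omega
            have e2 : σ - 1 = p := by omega
            rw [e, e2]; exact A3
          exact absurd (hA.symm.trans ha) (by decide)
      · by_cases hcase : -(p:ℤ) ≤ c - 1
        · have hA := A1 (σ-1) (by omega)
          have e : (-((σ-1:ℕ):ℤ)) = c - 1 := by omega
          rw [e] at hA
          exact absurd (hA.symm.trans ha) (by decide)
        · have hA : F^[σ-1] x (c-1) = W := by
            have e : c - 1 = -(p:ℤ)-1 := by omega
            rw [e]; exact wPerm x p _ A3 (σ-1) (by omega)
          exact absurd (hA.symm.trans ha) (by decide)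
      · by_cases hcase : -(p:ℤ) ≤ c - 1
        · rcases (IH (σ-1) (by omega) (by omega)).2.2 (c-1) hcase (by omega) ha (by omega) with
            h | h
          · left; omega
          · right; omega
        · have hA : F^[σ-1] x (c-1) = W := by
            have e : c - 1 = -(p:ℤ)-1 := by omega
            rw [e]; exact wPerm x p _ A3 (σ-1) (by omega)
          exact absurd (hA.symm.trans ha) (by decide)
    · by_cases hcase : -(p:ℤ) ≤ c - 1
      · exact absurd ha ((IH (σ-1) (by omega) (by omega)).1 (c-1) hcase (by omega))
      · rcases (IH (σ-1) (by omega) (by omega)).2.1 c hcp hc1 hcc with h | h | h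
        · left; omega
        · right; omega
        · exfalso; omega
  have hNW : ∀ e : ℤ, -(p:ℤ) ≤ e → e ≤ -1 → F^[σ] x e ≠ W := by
    intro e hep he1 hW
    rcases le_or_gt (σ:ℤ) (-e) with hα | hα
    · have hperm := wPerm x σ e hW ((-e).toNat) (by omega)
      have hA := A1 ((-e).toNat) (by omega)
      rw [show (-(((-e).toNat:ℕ)):ℤ) = e by omega] at hA
      exact absurd (hperm.symm.trans hA) (by decide)
    rcases le_or_gt (σ:ℤ) (2*p+1+e) with hβ | hβ
    · have hperm := wPerm x σ e hW ((2*p+1+e).toNat) (by omega)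
      have hA := A4 ((-e).toNat) (by omega)
      have e1 : 2*p+1-((-e).toNat) = (2*p+1+e).toNat := by omega
      have e2 : (-(((-e).toNat:ℕ)):ℤ) = e := by omega
      rw [e1, e2] at hA
      exact absurd (hperm.symm.trans hA) (by decide)
    · have h1 : 1 ≤ σ := by omega
      have hcen : F^[σ-1] x e ≠ W := (IH (σ-1) (by omega) (by omega)).1 e hep he1
      rw [stepX' x σ h1] at hW
      rcases Wpre _ _ _ hW with h | h | h | h | h | h
      · exact hcen h
      · obtain ⟨hcc, ha, hd⟩ := h
        by_cases hz : e + 1 = 0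
        · rcases colL hc (σ-1) (by omega) (by rwa [hz] at hd) with h0 | h0
          · omega
          · rcases (IH (σ-1) (by omega) (by omega)).2.2 (e-1) (by omega) (by omega) ha
              (by omega) with h' | h' <;> omega
        · rcases (IH (σ-1) (by omega) (by omega)).2.1 (e+1) (by omega) (by omega) hd with
            hs | hs | hs
          · omega
          · by_cases hcase : -(p:ℤ) ≤ e - 1
            · rcases (IH (σ-1) (by omega) (by omega)).2.2 (e-1) hcase (by omega) ha
                (by omega) with h' | h' <;> omega
            · have hW1 : F^[σ-1] x (e-1) = W := by
                rw [show e - 1 = -(p:ℤ)-1 by omega]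
                exact wPerm x p _ A3 (σ-1) (by omega)
              exact absurd (hW1.symm.trans ha) (by decide)
          · omega
      · obtain ⟨hcc, hd⟩ := h
        by_cases hz : e + 1 = 0
        · rcases colL hc (σ-1) (by omega) (by rwa [hz] at hd) with h0 | h0
          · omega
          · rcases (IH (σ-1) (by omega) (by omega)).2.2 e hep he1 hcc (by omega) with
              h' | h' <;> omega
        · rcases (IH (σ-1) (by omega) (by omega)).2.1 (e+1) (by omega) (by omega) hd with
            hs | hs | hs
          · omega
          · rcases (IH (σ-1) (by omega) (by omega)).2.2 e hep he1 hcc (by omega) with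
              h' | h' <;> omega
          · omega
      · obtain ⟨hcc, hd, ha⟩ := h
        by_cases hz : e + 1 = 0
        · exact noW0 hc (σ-1) (by omega) (by rwa [hz] at hd)
        · exact (IH (σ-1) (by omega) (by omega)).1 (e+1) (by omega) (by omega) hd
      · obtain ⟨hcc, ha⟩ := h
        rcases (IH (σ-1) (by omega) (by omega)).2.1 e hep he1 hcc with hs | hs | hs
        · omega
        · by_cases hcase : -(p:ℤ) ≤ e - 1
          · rcases (IH (σ-1) (by omega) (by omega)).2.2 (e-1) hcase (by omega) ha
              (by omega) with h' | h' <;> omega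
          · have hW1 : F^[σ-1] x (e-1) = W := by
              rw [show e - 1 = -(p:ℤ)-1 by omega]
              exact wPerm x p _ A3 (σ-1) (by omega)
            exact absurd (hW1.symm.trans ha) (by decide)
        · omega
      · obtain ⟨hcc, hd⟩ := h
        by_cases hz : e + 1 = 0
        · rcases colL hc (σ-1) (by omega) (by rwa [hz] at hd) with h0 | h0 <;>
            rcases (IH (σ-1) (by omega) (by omega)).2.1 e hep he1 hcc with hs | hs | hs <;>
              omega
        · rcases (IH (σ-1) (by omega) (by omega)).2.1 e hep he1 hcc with hs | hs | hs <;>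
            rcases (IH (σ-1) (by omega) (by omega)).2.1 (e+1) (by omega) (by omega) hd with
              hs' | hs' | hs' <;> omega
  exact ⟨hNW, hCL, hCR⟩

lemma nonmem (hne : p ≠ p') : False := by
  have hp2 := hc.hp
  have hp2' := hc.hp'
  have hT3 := hc.hT3
  have h1 : 1 ≤ 2*p+2*p'+5 := by omega
  rw [stepX' x _ h1] at hT3
  have e1 : 2*p+2*p'+5-1 = 2*p+2*p'+4 := by omega
  rw [e1] at hT3
  rcases Rpre _ _ _ hT3 with ⟨hcc, ha, hd⟩ | ⟨hcc, ha, hd⟩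
  · rw [show ((0:ℤ)-1) = -1 by ring] at ha
    have hCR := (master hc (2*p+2*p'+4) (by omega)).2.2 (-1 : ℤ)
      (by omega) (by omega) ha (by omega)
    rcases hCR with h | h <;> omega
  · have hB : F^[2*p+2*p'+4] x 0 = B := hc.hb4 _ (by omega) (by omega)
    rw [hB] at hcc
    exact absurd hcc (by decide)

end Main

def row (p : ℕ) (m : ℤ) (s : A4) : ℤ → A4 := fun i =>
  if i = -(p:ℤ)-1 ∨ i = 2 then W else if i = m then s else B

lemma Frow_l (p : ℕ) (m : ℤ) (hm1 : -(p:ℤ)+1 ≤ m) (hm2 : m ≤ 1) :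
    F (row p m L) = row p (m-1) L := by
  funext i
  simp only [F, row]
  split_ifs <;> first | rfl | decide | (exfalso; omega)


lemma Frow_lturn (p : ℕ) : F (row p (-(p:ℤ)) L) = row p (-(p:ℤ)) R := by
  funext i
  simp only [F, row]
  split_ifs <;> first | rfl | decide | (exfalso; omega)

lemma Frow_r (p : ℕ) (m : ℤ) (hm1 : -(p:ℤ) ≤ m) (hm2 : m ≤ 0) :
    F (row p m R) = row p (m+1) R := by
  funext i
  simp only [F, row]
  split_ifs <;> first | rfl | decide | (exfalso; omega)

lemma Frow_rturn (p : ℕ) (hp : 1 ≤ p) : F (row p 1 R) = row p 1 L := by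
  funext i
  simp only [F, row]
  split_ifs <;> first | rfl | decide | (exfalso; omega)

def ct (p t : ℕ) : ℤ → A4 := fun i =>
  if i = -(p:ℤ)-1 ∨ i = 2 then W
  else if t % (2*p+4) ≤ p ∧ i = -((t % (2*p+4) : ℕ):ℤ) then L
  else if p+1 ≤ t % (2*p+4) ∧ i = ((t % (2*p+4) : ℕ):ℤ) - (2*p+1) then R
  else if t % (2*p+4) = 2*p+3 ∧ i = 1 then L
  else B

lemma succMod (n t : ℕ) (hn : 2 ≤ n) :
    ((t+1) % n = t % n + 1 ∧ t % n + 1 < n) ∨ ((t+1) % n = 0 ∧ t % n + 1 = n) := by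
  have hlt : t % n < n := Nat.mod_lt _ (by omega)
  have h : (t+1) % n = (t % n + 1) % n := by
    conv_lhs => rw [Nat.add_mod]
    rw [Nat.mod_eq_of_lt (show 1 < n by omega)]
  by_cases hcase : t % n + 1 = n
  · right
    refine ⟨?_, hcase⟩
    rw [h, hcase, Nat.mod_self]
  · left
    have hlt2 : t % n + 1 < n := by omega
    exact ⟨by rw [h, Nat.mod_eq_of_lt hlt2], hlt2⟩

lemma ct_row_l (p t : ℕ) (hφ : t % (2*p+4) ≤ p) :
    ct p t = row p (-((t % (2*p+4):ℕ)):ℤ) L := by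
  have hlt : t % (2*p+4) < 2*p+4 := Nat.mod_lt _ (by omega)
  funext i
  simp only [ct, row]
  split_ifs <;> first | rfl | decide | (exfalso; omega)

lemma ct_row_r (p t : ℕ) (h1 : p+1 ≤ t % (2*p+4)) (h2 : t % (2*p+4) ≤ 2*p+2) :
    ct p t = row p ((((t % (2*p+4):ℕ)):ℤ) - (2*p+1)) R := by
  have hlt : t % (2*p+4) < 2*p+4 := Nat.mod_lt _ (by omega)
  funext i
  simp only [ct, row]
  split_ifs <;> first | rfl | decide | (exfalso; omega)

lemma ct_row_e (p t : ℕ) (h : t % (2*p+4) = 2*p+3) :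
    ct p t = row p 1 L := by
  funext i
  simp only [ct, row]
  split_ifs <;> first | rfl | decide | (exfalso; omega)

lemma stepCT (p : ℕ) (hp : 1 ≤ p) (t : ℕ) : F (ct p t) = ct p (t+1) := by
  have hn : 2 ≤ 2*p+4 := by omega
  have hlt : t % (2*p+4) < 2*p+4 := Nat.mod_lt _ (by omega)
  rcases succMod (2*p+4) t hn with ⟨hs, hlt2⟩ | ⟨hs, heq⟩
  · by_cases h1 : t % (2*p+4) ≤ p
    · by_cases h2 : t % (2*p+4) = p
      · rw [ct_row_l p t h1, ct_row_r p (t+1) (by omega) (by omega), hs, h2]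
        have e1 : (((p:ℕ)+1:ℕ):ℤ) - (2*p+1) = -(p:ℤ) := by push_cast; ring
        rw [e1]
        exact Frow_lturn p
      · rw [ct_row_l p t h1, ct_row_l p (t+1) (by omega), hs]
        have e1 : (-((t % (2*p+4) + 1 : ℕ)):ℤ) = -((t % (2*p+4) : ℕ):ℤ) - 1 := by
          push_cast; ring
        rw [e1]
        exact Frow_l p _ (by omega) (by omega)
    · by_cases h3 : t % (2*p+4) ≤ 2*p+1
      · rw [ct_row_r p t (by omega) (by omega), ct_row_r p (t+1) (by omega) (by omega), hs]
        have e1 : (((t % (2*p+4) + 1 : ℕ)):ℤ) - (2*p+1) =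
            ((t % (2*p+4) : ℕ):ℤ) - (2*p+1) + 1 := by push_cast; ring
        rw [e1]
        exact Frow_r p _ (by omega) (by omega)
      · by_cases h4 : t % (2*p+4) = 2*p+2
        · rw [ct_row_r p t (by omega) (by omega), ct_row_e p (t+1) (by omega), h4]
          have e1 : (((2*p+2:ℕ)):ℤ) - (2*p+1) = 1 := by push_cast; ring
          rw [e1]
          exact Frow_rturn p hp
        · exfalso; omega
  · have h5 : t % (2*p+4) = 2*p+3 := by omega
    rw [ct_row_e p t h5, ct_row_l p (t+1) (by omega), hs]
    have e1 : (-((0:ℕ)):ℤ) = 1 - 1 := by norm_num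
    rw [e1]
    exact Frow_l p 1 (by omega) (by omega)


def colfun (p p' : ℕ) : ℕ → A4 := fun s =>
  if s = 0 then L else if s = 2*p+1 then R else if s = 2*p+4 then L
  else if s = 2*p+2*p'+5 then R else B

lemma ct_col (p : ℕ) (hp : 1 ≤ p) (j : ℕ) (hj : j ≤ 4*p+5) : ct p j 0 = colfun p p j := by
  have hlt : j % (2*p+4) < 2*p+4 := Nat.mod_lt _ (by omega)
  rcases Nat.lt_or_ge j (2*p+4) with h | h
  · have hmod : j % (2*p+4) = j := Nat.mod_eq_of_lt h
    simp only [ct, colfun, hmod]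
    split_ifs <;> first | rfl | decide | (exfalso; omega)
  · have hmod : j % (2*p+4) = j - (2*p+4) := by
      rw [Nat.mod_eq_sub_mod h, Nat.mod_eq_of_lt (by omega)]
    simp only [ct, colfun, hmod]
    split_ifs <;> first | rfl | decide | (exfalso; omega)

lemma iterCT (p : ℕ) (hp : 1 ≤ p) : ∀ j, F^[j] (ct p 0) = ct p j := by
  intro j
  induction j with
  | zero => rfl
  | succ j ih => rw [Function.iterate_succ_apply', ih, stepCT p hp j]



lemma isCA : IsCA F := by
  constructor
  · apply continuous_pi
    intro i
    have h : (fun x : ℤ → A4 => F x i) =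
        (fun t : A4 × A4 × A4 => f t.1 t.2.1 t.2.2) ∘
          (fun x : ℤ → A4 => (x (i - 1), x i, x (i + 1))) := rfl
    rw [h]
    exact (continuous_of_discreteTopology).comp
      (((continuous_apply _).prodMk ((continuous_apply _).prodMk (continuous_apply _))))
  · intro x
    funext i
    simp only [F, shiftZ]
    ring_nf

def wrd (p p' : ℕ) : List A4 := List.ofFn (fun j : Fin (2*p+2*p'+6) => colfun p p' (j : ℕ))

lemma mem_wrd (p : ℕ) (hp : 1 ≤ p) : wrd p p ∈ lang (traceSubshift F) := by
  refine ⟨caTrace F (ct p 0), ⟨ct p 0, rfl⟩, 0, ?_⟩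
  apply List.ext_getElem
  · simp [wrd]
  · intro j h1 h2
    have hj : j < 2*p+2*p+6 := by simp [wrd] at h1; omega
    simp only [wrd, List.getElem_ofFn, caTrace]
    rw [Nat.zero_add, iterCT p hp j, ct_col p hp j (by omega)]

lemma nonmem_wrd (p p' : ℕ) (hp : 2 ≤ p) (hp' : 2 ≤ p') (hne : p ≠ p') :
    wrd p p' ∉ lang (traceSubshift F) := by
  rintro ⟨z, ⟨x₀, hz⟩, i, hw⟩
  have hlen : (wrd p p').length = 2*p+2*p'+6 := by simp only [wrd, List.length_ofFn]
  have hpt : ∀ j, j < 2*p+2*p'+6 → colfun p p' j = z (i + j) := by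
    intro j hj
    have h2 := List.getElem_of_eq hw (show j < (wrd p p').length by omega)
    simp only [wrd, List.getElem_ofFn] at h2
    exact h2
  have key : ∀ s, s ≤ 2*p+2*p'+5 → F^[s] (F^[i] x₀) 0 = colfun p p' s := by
    intro s hs
    rw [← Function.iterate_add_apply]
    have h2 : z (i + s) = F^[s + i] x₀ 0 := by
      rw [← hz]; simp only [caTrace, Nat.add_comm i s]
    rw [← hpt s (by omega)] at h2
    exact h2.symm
  refine nonmem (x := F^[i] x₀) ?_ hne
  refine ⟨?_, ?_, ?_, ?_, ?_, ?_, ?_, ?_, hp, hp'⟩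
  · rw [key 0 (by omega)]; simp only [colfun]
    split_ifs <;> first | rfl | contradiction | (exfalso; omega)
  · intro s h1 h2
    rw [key s (by omega)]; simp only [colfun]
    split_ifs <;> first | rfl | contradiction | (exfalso; omega)
  · rw [key (2*p+1) (by omega)]; simp only [colfun]
    split_ifs <;> first | rfl | contradiction | (exfalso; omega)
  · rw [key (2*p+2) (by omega)]; simp only [colfun]
    split_ifs <;> first | rfl | contradiction | (exfalso; omega)
  · rw [key (2*p+3) (by omega)]; simp only [colfun]
    split_ifs <;> first | rfl | contradiction | (exfalso; omega)
  · rw [key (2*p+4) (by omega)]; simp only [colfun]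
    split_ifs <;> first | rfl | contradiction | (exfalso; omega)
  · intro s h1 h2
    rw [key s (by omega)]; simp only [colfun]
    split_ifs <;> first | rfl | contradiction | (exfalso; omega)
  · rw [key (2*p+2*p'+5) (by omega)]; simp only [colfun]
    split_ifs <;> first | rfl | contradiction | (exfalso; omega)

def prew (n : ℕ) : List A4 := List.ofFn (fun j : Fin (2*n+5) => colfun n 0 (j : ℕ))
def sufw (m : ℕ) : List A4 := List.ofFn (fun j : Fin (2*m+1) => if (j : ℕ) = 2*m then R else B)

lemma wrd_split (n m : ℕ) (hm : 1 ≤ m) : wrd n m = prew n ++ sufw m := by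
  apply List.ext_getElem
  · simp [wrd, prew, sufw]; omega
  · intro j h1 h2
    have hj : j < 2*n+2*m+6 := by simp [wrd] at h1; omega
    simp only [wrd, List.getElem_ofFn]
    by_cases hcase : j < 2*n+5
    · rw [List.getElem_append_left (by simp [prew]; omega)]
      simp only [prew, List.getElem_ofFn, colfun]
      split_ifs <;> first | rfl | contradiction | (exfalso; omega)
    · rw [List.getElem_append_right (by simp [prew]; omega)]
      simp only [prew, sufw, List.getElem_ofFn, List.length_ofFn, colfun]
      split_ifs <;> first | rfl | contradiction | (exfalso; omega)

lemma notRegular : ¬ (lang (traceSubshift F)).IsRegular := by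
  rintro ⟨σ, fin, M, hM⟩
  have hni : ¬ Function.Injective (fun n : ℕ => M.evalFrom M.start (prew (n+2))) := by
    intro hinj
    exact Set.infinite_range_of_injective hinj (Set.toFinite _)
  rw [Function.not_injective_iff] at hni
  obtain ⟨n, m, heq, hnm⟩ := hni
  have hmem : wrd (n+2) (n+2) ∈ M.accepts := by
    rw [hM]; exact mem_wrd (n+2) (by omega)
  have hnot : wrd (m+2) (n+2) ∉ M.accepts := by
    rw [hM]; exact nonmem_wrd (m+2) (n+2) (by omega) (by omega) (by omega)
  rw [DFA.mem_accepts] at hmem hnot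
  apply hnot
  have e1 : M.eval (wrd (m+2) (n+2)) = M.eval (wrd (n+2) (n+2)) := by
    rw [wrd_split (m+2) (n+2) (by omega), wrd_split (n+2) (n+2) (by omega)]
    show M.evalFrom M.start _ = M.evalFrom M.start _
    rw [DFA.evalFrom_of_append, DFA.evalFrom_of_append, heq]
  rw [e1]
  exact hmem

end Stmt17

/-- There is a cellular automaton on a four-letter alphabet whose trace
subshift is not sofic, i.e. the language of its trace subshift is not regular. -/
theorem stmt17 :
    ∃ F : (ℤ → Fin 4) → (ℤ → Fin 4), IsCA F ∧ ¬ (lang (traceSubshift F)).IsRegular := by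
  exact ⟨Stmt17.F, Stmt17.isCA, Stmt17.notRegular⟩
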